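/- Let c₁, c₂, C, C₀ ∈ ℝ with c₁ ≠ 0, C₀ ≠ 0 and D := c₂² + 4c₁ > 0. Let Q : ℝ → ℝ be continuous on an open interval I and let R be an antiderivative of Q on I (R'(t) = Q(t)). Define y(t) = exp(−c₂·t)·exp(R(t)) · [((2c₁ + C·c₂)·sinh(½·√D·t) + C·√D·cosh(½·√D·t))] / [C₀·((c₂ − 2C)·sinh(½·√D·t) − √D·cosh(½·√D·t))]. Then at every t ∈ I where (c₂ − 2C)·sinh(½·√D·t) − √D·cosh(½·√D·t) is nonzero, y satisfies the Riccati equation y'(t) = C₀·exp(c₂·t)·exp(−R(t))·y(t)² + Q(t)·y(t) − (c₁/C₀)·exp(−c₂·t)·exp(R(t)). -/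

import Mathlib

lemma riccati_key (c₁ c₂ C r sh ch : ℝ) (hr : r ^ 2 = c₂ ^ 2 + 4 * c₁) :
    (r / 2 * ((2 * c₁ + C * c₂) * ch + C * r * sh)) * ((c₂ - 2 * C) * sh - r * ch)
      - ((2 * c₁ + C * c₂) * sh + C * r * ch) * (r / 2 * ((c₂ - 2 * C) * ch - r * sh))
      - c₂ * (((2 * c₁ + C * c₂) * sh + C * r * ch) * ((c₂ - 2 * C) * sh - r * ch))
      - ((2 * c₁ + C * c₂) * sh + C * r * ch) ^ 2
      + c₁ * ((c₂ - 2 * C) * sh - r * ch) ^ 2 = 0 := by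
  linear_combination (c₁ + c₂ * C - C ^ 2) * sh ^ 2 * hr

lemma riccati_final_alg (a b C₀ N M N' M' qt c₁ c₂ : ℝ) (ha : a ≠ 0) (hb : b ≠ 0)
    (hC₀ : C₀ ≠ 0) (hM : M ≠ 0)
    (key : N' * M - N * M' - c₂ * (N * M) - N ^ 2 + c₁ * M ^ 2 = 0) :
    (((-c₂ * a⁻¹ * b + a⁻¹ * (b * qt)) * N + a⁻¹ * b * N') * (C₀ * M)
        - a⁻¹ * b * N * (C₀ * M')) / (C₀ * M) ^ 2
      = C₀ * a * b⁻¹ * (a⁻¹ * b * N / (C₀ * M)) ^ 2 + qt * (a⁻¹ * b * N / (C₀ * M))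
        - c₁ / C₀ * a⁻¹ * b := by
  field_simp
  linear_combination key

set_option maxHeartbeats 1000000 in
/-- Explicit solution of the Riccati equation
`y' = C₀ e^{c₂ t} e^{-R} y² + Q y - (c₁/C₀) e^{-c₂ t} e^{R}` when `Q` is arbitrary
continuous with antiderivative `R`, and `D = c₂² + 4c₁ > 0`. -/
theorem riccati_solution_Q_arbitrary
    (I : Set ℝ) (hI : IsOpen I)
    (c₁ c₂ C C₀ : ℝ) (hc₁ : c₁ ≠ 0) (hC₀ : C₀ ≠ 0)
    (D : ℝ) (hD : D = c₂ ^ 2 + 4 * c₁) (hDpos : 0 < D)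
    (Q R : ℝ → ℝ)
    (hQ : ContinuousOn Q I)
    (hR : ∀ t ∈ I, HasDerivAt R (Q t) t)
    (y : ℝ → ℝ)
    (hy : ∀ t, y t =
      Real.exp (-(c₂ * t)) * Real.exp (R t) *
        ((2 * c₁ + C * c₂) * Real.sinh (1 / 2 * Real.sqrt D * t)
          + C * Real.sqrt D * Real.cosh (1 / 2 * Real.sqrt D * t)) /
        (C₀ * ((c₂ - 2 * C) * Real.sinh (1 / 2 * Real.sqrt D * t)
          - Real.sqrt D * Real.cosh (1 / 2 * Real.sqrt D * t)))) :
    ∀ t ∈ I,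
      (c₂ - 2 * C) * Real.sinh (1 / 2 * Real.sqrt D * t)
          - Real.sqrt D * Real.cosh (1 / 2 * Real.sqrt D * t) ≠ 0 →
      deriv y t =
        C₀ * Real.exp (c₂ * t) * Real.exp (-(R t)) * (y t) ^ 2 + Q t * y t
          - (c₁ / C₀) * Real.exp (-(c₂ * t)) * Real.exp (R t) := by
  intro t ht hM
  have hr2 : Real.sqrt D ^ 2 = c₂ ^ 2 + 4 * c₁ := by
    rw [Real.sq_sqrt hDpos.le, hD]
  set r := Real.sqrt D with hrdef
  set sh := Real.sinh (1 / 2 * r * t) with hshdef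
  set ch := Real.cosh (1 / 2 * r * t) with hchdef
  set N := (2 * c₁ + C * c₂) * sh + C * r * ch with hNdef
  set M := (c₂ - 2 * C) * sh - r * ch with hMdef
  set N' := r / 2 * ((2 * c₁ + C * c₂) * ch + C * r * sh) with hN'def
  set M' := r / 2 * ((c₂ - 2 * C) * ch - r * sh) with hM'def
  have hyfun : y = fun x => Real.exp (-(c₂ * x)) * Real.exp (R x) *
      ((2 * c₁ + C * c₂) * Real.sinh (1 / 2 * r * x)
        + C * r * Real.cosh (1 / 2 * r * x)) /
      (C₀ * ((c₂ - 2 * C) * Real.sinh (1 / 2 * r * x)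
        - r * Real.cosh (1 / 2 * r * x))) := funext hy
  have hlin : HasDerivAt (fun x : ℝ => 1 / 2 * r * x) (1 / 2 * r) t := by
    simpa using (hasDerivAt_id t).const_mul (1 / 2 * r)
  have hsh := hlin.sinh
  have hch := hlin.cosh
  have hNder : HasDerivAt (fun x => (2 * c₁ + C * c₂) * Real.sinh (1 / 2 * r * x)
      + C * r * Real.cosh (1 / 2 * r * x)) N' t := by
    have := ((hsh.const_mul (2 * c₁ + C * c₂)).add (hch.const_mul (C * r)))
    refine this.congr_deriv ?_
    rw [hN'def, hshdef, hchdef]; ring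
  have hMder : HasDerivAt (fun x => (c₂ - 2 * C) * Real.sinh (1 / 2 * r * x)
      - r * Real.cosh (1 / 2 * r * x)) M' t := by
    have := ((hsh.const_mul (c₂ - 2 * C)).sub (hch.const_mul r))
    refine this.congr_deriv ?_
    rw [hM'def, hshdef, hchdef]; ring
  have he1 : HasDerivAt (fun x : ℝ => Real.exp (-(c₂ * x)))
      (-c₂ * Real.exp (-(c₂ * t))) t := by
    have h0 : HasDerivAt (fun x : ℝ => -(c₂ * x)) (-c₂) t := by
      simpa using ((hasDerivAt_id t).const_mul c₂).fun_neg
    simpa [mul_comm] using h0.exp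
  have he2 : HasDerivAt (fun x => Real.exp (R x)) (Real.exp (R t) * Q t) t :=
    (hR t ht).exp
  have hden : C₀ * M ≠ 0 := mul_ne_zero hC₀ hM
  have hmain : HasDerivAt y
      (((((-c₂ * Real.exp (-(c₂ * t))) * Real.exp (R t)
          + Real.exp (-(c₂ * t)) * (Real.exp (R t) * Q t)) * N
        + Real.exp (-(c₂ * t)) * Real.exp (R t) * N') * (C₀ * M)
        - Real.exp (-(c₂ * t)) * Real.exp (R t) * N * (C₀ * M'))
        / (C₀ * M) ^ 2) t := by
    rw [hyfun]
    exact ((he1.mul he2).mul hNder).div (hMder.const_mul C₀) hden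
  rw [hmain.deriv, hy t, ← hshdef, ← hchdef, ← hNdef, ← hMdef]
  have ha : Real.exp (c₂ * t) ≠ 0 := Real.exp_ne_zero _
  have hb : Real.exp (R t) ≠ 0 := Real.exp_ne_zero _
  have hexpc : Real.exp (-(c₂ * t)) = (Real.exp (c₂ * t))⁻¹ := Real.exp_neg _
  have hexpR : Real.exp (-(R t)) = (Real.exp (R t))⁻¹ := Real.exp_neg _
  rw [hexpc, hexpR]
  have key : N' * M - N * M' - c₂ * (N * M) - N ^ 2 + c₁ * M ^ 2 = 0 := by
    rw [hN'def, hM'def, hNdef, hMdef]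
    exact riccati_key c₁ c₂ C r sh ch hr2
  exact riccati_final_alg (Real.exp (c₂ * t)) (Real.exp (R t)) C₀ N M N' M' (Q t)
    c₁ c₂ ha hb hC₀ hM key
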